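/- Let d = 2 and assume h ≥ δ^μ and λ₁, λ₂ > 0. Fix q ∈ {1,…,N}. Then: (i) a_q^{(−1,0)} − a_q^{(J−1,−1)} ≥ λ₂ (h + δ^μ)/2 − λ₁; (ii) for every j₂ with 0 ≤ j₂ ≤ J−3, a_q^{(−1,j₂+1)} − a_q^{(J−1,j₂)} = λ₂ h − λ₁; and (iii) a_q^{(−1,J−1)} − a_q^{(J−1,J−2)} ≥ λ₂ (h + δ^μ)/2 − λ₁. In particular, if λ₁ < λ₂ · min{ h, (h + δ^μ)/2 }, then the tail of each row is strictly below the head of the next row: a_q^{(J−1,j₂)} < a_q^{(−1,j₂+1)} for all j₂ ∈ {−1,…,J−2}. -/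
import Mathlib


noncomputable section

/-- The smeared-out Heaviside shape function `S(z) = z - sin(2πz)/(2π)`. -/
def Sfun (z : ℝ) : ℝ := z - Real.sin (2 * Real.pi * z) / (2 * Real.pi)

/-- The quintic shape function `P(z) = z³(6z² - 15z + 10)`. -/
def Pfun (z : ℝ) : ℝ := z ^ 3 * (6 * z ^ 2 - 15 * z + 10)

/-- The inner function `ψ_q(x) = φ(x + (1-q)δ) - φ((1-q)δ)`. -/
def psi (φ : ℝ → ℝ) (δ : ℝ) (q : ℕ) (x : ℝ) : ℝ :=
  φ (x + (1 - (q : ℝ)) * δ) - φ ((1 - (q : ℝ)) * δ)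

/-- The hypercube center coordinate `c_q^j`, with the boundary conventions
`c_q^{-1} = 0` and `c_q^{J-1} = 1`. -/
def center (h δ : ℝ) (J : ℕ) (q : ℕ) (j : ℤ) : ℝ :=
  if j = -1 then 0
  else if j = (J : ℤ) - 1 then 1
  else (j : ℝ) * h + (h + δ) / 2 + ((q : ℝ) - 1) * δ

/-- The mapped hypercube center `a_q^jv = Ψ_q(𝐜_q^jv) = Σ_p λ_p ψ_q(c_q^{j_p})`. -/
def amap (φ : ℝ → ℝ) (h δ : ℝ) (J : ℕ) {d : ℕ} (lam : Fin d → ℝ)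
    (q : ℕ) (jv : Fin d → ℤ) : ℝ :=
  ∑ p, lam p * psi φ δ q (center h δ J q (jv p))

set_option maxHeartbeats 1000000

/-- in 2D, tails and heads of consecutive rows of mapped centers. -/
theorem amap_two_dim_rows
    (N : ℕ) (hN : 2 ≤ N) (δ : ℝ) (hδ : 0 < δ) (μ : ℝ) (hμ : 0 < μ)
    (h : ℝ) (hh : h = (N : ℝ) * δ)
    (φ : ℝ → ℝ)
    (hφS : ∀ j : ℤ, ∀ t ∈ Set.Icc ((j : ℝ) * h) ((j : ℝ) * h + δ),
      φ t = (j : ℝ) * h + δ ^ μ * Sfun ((t - (j : ℝ) * h) / δ))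
    (hφP : ∀ j : ℤ, ∀ t ∈ Set.Icc ((j : ℝ) * h + δ) (((j : ℝ) + 1) * h),
      φ t = (j : ℝ) * h + δ ^ μ + (h - δ ^ μ) * Pfun ((t - (j : ℝ) * h - δ) / (h - δ)))
    (J : ℕ) (hJ : 0 < J) (hJh : (J : ℝ) * h = 1)
    (l1 l2 : ℝ) (hl1 : 0 < l1) (hl2 : 0 < l2)
    (q : ℕ) (hq1 : 1 ≤ q) (hq2 : q ≤ N)
    (hle : δ ^ μ ≤ h)
    (a : ℤ → ℤ → ℝ)
    (ha : ∀ j₁ j₂ : ℤ, a j₁ j₂ =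
      l1 * psi φ δ q (center h δ J q j₁) + l2 * psi φ δ q (center h δ J q j₂)) :
    (l2 * ((h + δ ^ μ) / 2) - l1 ≤ a (-1) 0 - a ((J : ℤ) - 1) (-1)) ∧
    (∀ j₂ : ℤ, 0 ≤ j₂ → j₂ ≤ (J : ℤ) - 3 →
      a (-1) (j₂ + 1) - a ((J : ℤ) - 1) j₂ = l2 * h - l1) ∧
    (l2 * ((h + δ ^ μ) / 2) - l1 ≤ a (-1) ((J : ℤ) - 1) - a ((J : ℤ) - 1) ((J : ℤ) - 2)) ∧
    (l1 < l2 * min h ((h + δ ^ μ) / 2) →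
      ∀ j₂ : ℤ, -1 ≤ j₂ → j₂ ≤ (J : ℤ) - 2 →
        a ((J : ℤ) - 1) j₂ < a (-1) (j₂ + 1)) := by
  have hδμpos : 0 < δ ^ μ := Real.rpow_pos_of_pos hδ μ
  have hNr : (2:ℝ) ≤ (N:ℝ) := by exact_mod_cast hN
  have hqr1 : (1:ℝ) ≤ (q:ℝ) := by exact_mod_cast hq1
  have hqrN : (q:ℝ) ≤ (N:ℝ) := by exact_mod_cast hq2
  have e1 : (q:ℝ) * δ ≤ (N:ℝ) * δ := mul_le_mul_of_nonneg_right hqrN hδ.le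
  have e2 : δ ≤ (q:ℝ) * δ := by
    nlinarith [mul_le_mul_of_nonneg_right hqr1 hδ.le]
  have e3 : 2 * δ ≤ (N:ℝ) * δ := by
    nlinarith [mul_le_mul_of_nonneg_right hNr hδ.le]
  have hδh : δ < h := by rw [hh]; linarith
  have hh0 : 0 < h := by linarith
  set s : ℝ := ((N:ℝ) - q) * δ / (h - δ) with hs
  have hs0 : 0 ≤ s := div_nonneg (by nlinarith) (by linarith)
  have hs1 : s ≤ 1 := by
    rw [hs, div_le_one (by linarith)]
    rw [hh]; nlinarith
  have hP0 : 0 ≤ Pfun s := by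
    have hq : 0 ≤ 6 * s ^ 2 - 15 * s + 10 := by nlinarith [sq_nonneg (s - 5/4)]
    exact mul_nonneg (pow_nonneg hs0 3) hq
  have hP1 : Pfun s ≤ 1 := by
    have hid : 1 - Pfun s = (1 - s) ^ 3 * (6 * s ^ 2 + 3 * s + 1) := by
      unfold Pfun; ring
    have hE : (0:ℝ) ≤ (1 - s) ^ 3 * (6 * s ^ 2 + 3 * s + 1) :=
      mul_nonneg (pow_nonneg (by linarith) 3) (by nlinarith)
    linarith
  -- value of φ at (1-q)δ
  have hφt0 : φ ((1 - (q:ℝ)) * δ) = -h + δ ^ μ + (h - δ ^ μ) * Pfun s := by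
    have hmem : (1 - (q:ℝ)) * δ ∈
        Set.Icc ((((-1:ℤ)):ℝ) * h + δ) (((((-1:ℤ)):ℝ) + 1) * h) := by
      simp only [Set.mem_Icc]
      push_cast
      constructor
      · rw [hh]; nlinarith
      · nlinarith
    have hv := hφP (-1) _ hmem
    rw [hv]
    have hnum : (1 - (q:ℝ)) * δ - (((-1:ℤ)):ℝ) * h - δ = ((N:ℝ) - q) * δ := by
      push_cast; linear_combination hh
    rw [hnum, ← hs]
    push_cast; ring
  have hFle : φ ((1 - (q:ℝ)) * δ) ≤ 0 := by
    rw [hφt0]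
    have := mul_le_mul_of_nonneg_left hP1 (by linarith : (0:ℝ) ≤ h - δ ^ μ)
    linarith
  have hFge : δ ^ μ - h ≤ φ ((1 - (q:ℝ)) * δ) := by
    rw [hφt0]
    have := mul_nonneg (by linarith : (0:ℝ) ≤ h - δ ^ μ) hP0
    linarith
  -- value of φ at 1 + (1-q)δ
  have hφ1 : φ (1 + (1 - (q:ℝ)) * δ) = ((J:ℝ) - 1) * h + δ ^ μ + (h - δ ^ μ) * Pfun s := by
    have hmem : 1 + (1 - (q:ℝ)) * δ ∈
        Set.Icc (((((J:ℤ) - 1):ℤ):ℝ) * h + δ) ((((((J:ℤ) - 1):ℤ):ℝ) + 1) * h) := by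
      simp only [Set.mem_Icc]
      push_cast
      constructor
      · have : (q:ℝ) * δ ≤ h := by rw [hh]; linarith
        nlinarith [hJh]
      · nlinarith [hJh]
    have hv := hφP ((J:ℤ) - 1) _ hmem
    rw [hv]
    have hnum : 1 + (1 - (q:ℝ)) * δ - ((((J:ℤ) - 1):ℤ):ℝ) * h - δ = ((N:ℝ) - q) * δ := by
      push_cast; linear_combination hh - hJh
    rw [hnum, ← hs]
    push_cast; ring
  -- psi values
  have hψ0 : psi φ δ q 0 = 0 := by simp [psi]
  have hψ1 : psi φ δ q 1 = 1 := by
    simp only [psi]; rw [hφ1, hφt0]; linarith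
  have hψmid : ∀ j : ℤ, psi φ δ q ((j:ℝ) * h + (h + δ) / 2 + ((q:ℝ) - 1) * δ)
      = (j:ℝ) * h + (h + δ ^ μ) / 2 - φ ((1 - (q:ℝ)) * δ) := by
    intro j
    simp only [psi]
    have hx : ((j:ℝ) * h + (h + δ) / 2 + ((q:ℝ) - 1) * δ) + (1 - (q:ℝ)) * δ
        = (j:ℝ) * h + (h + δ) / 2 := by ring
    rw [hx]
    have hmem : (j:ℝ) * h + (h + δ) / 2 ∈
        Set.Icc ((j:ℝ) * h + δ) (((j:ℝ) + 1) * h) := by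
      simp only [Set.mem_Icc]
      constructor <;> · nlinarith
    rw [hφP j _ hmem]
    have harg : ((j:ℝ) * h + (h + δ) / 2 - (j:ℝ) * h - δ) / (h - δ) = 1/2 := by
      rw [div_eq_iff (by linarith : h - δ ≠ 0)]; ring
    rw [harg]
    have hPh : Pfun (1/2) = 1/2 := by norm_num [Pfun]
    rw [hPh]; ring
  -- center values
  have c_neg : center h δ J q (-1) = 0 := by simp [center]
  have c_last : center h δ J q ((J:ℤ) - 1) = 1 := by
    simp only [center]
    rw [if_neg (by omega)]; simp
  have c_mid : ∀ j : ℤ, j ≠ -1 → j ≠ (J:ℤ) - 1 →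
      center h δ J q j = (j:ℝ) * h + (h + δ) / 2 + ((q:ℝ) - 1) * δ := by
    intro j h1 h2
    simp only [center]
    rw [if_neg h1, if_neg h2]
  -- part (i)
  have part1 : l2 * ((h + δ ^ μ) / 2) - l1 ≤ a (-1) 0 - a ((J:ℤ) - 1) (-1) := by
    rw [ha, ha, c_neg, c_last, hψ0, hψ1]
    by_cases h0 : (0:ℤ) = (J:ℤ) - 1
    · have hc0 : center h δ J q 0 = 1 := by
        simp only [center]; rw [if_neg (by omega), if_pos h0]
      rw [hc0, hψ1]
      have hJ1 : (J:ℝ) = 1 := by exact_mod_cast (by omega : (J:ℤ) = 1)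
      have hh1 : h = 1 := by rw [hJ1] at hJh; linarith
      have := mul_le_mul_of_nonneg_left (show (h + δ ^ μ)/2 ≤ 1 by linarith) hl2.le
      linarith
    · rw [c_mid 0 (by omega) h0, hψmid 0]
      push_cast
      have := mul_le_mul_of_nonneg_left hFle hl2.le
      linarith
  -- part (ii)
  have part2 : ∀ j₂ : ℤ, 0 ≤ j₂ → j₂ ≤ (J:ℤ) - 3 →
      a (-1) (j₂ + 1) - a ((J:ℤ) - 1) j₂ = l2 * h - l1 := by
    intro j₂ hj0 hj3
    rw [ha, ha, c_neg, c_last, hψ0, hψ1,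
        c_mid (j₂ + 1) (by omega) (by omega), c_mid j₂ (by omega) (by omega),
        hψmid (j₂ + 1), hψmid j₂]
    push_cast
    ring
  -- part (iii)
  have part3 : l2 * ((h + δ ^ μ) / 2) - l1 ≤
      a (-1) ((J:ℤ) - 1) - a ((J:ℤ) - 1) ((J:ℤ) - 2) := by
    rw [ha, ha, c_neg, c_last, hψ0, hψ1]
    by_cases h2 : (J:ℤ) - 2 = -1
    · have hc : center h δ J q ((J:ℤ) - 2) = 0 := by
        simp only [center]; rw [if_pos h2]
      rw [hc, hψ0]
      have hJ1 : (J:ℝ) = 1 := by exact_mod_cast (by omega : (J:ℤ) = 1)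
      have hh1 : h = 1 := by rw [hJ1] at hJh; linarith
      have := mul_le_mul_of_nonneg_left (show (h + δ ^ μ)/2 ≤ 1 by linarith) hl2.le
      linarith
    · rw [c_mid ((J:ℤ) - 2) h2 (by omega), hψmid ((J:ℤ) - 2)]
      push_cast
      have hinner : (h + δ ^ μ) / 2 ≤
          1 - (((J:ℝ) - 2) * h + (h + δ ^ μ) / 2 - φ ((1 - (q:ℝ)) * δ)) := by
        linarith [hFge, hJh]
      have := mul_le_mul_of_nonneg_left hinner hl2.le
      linarith
  refine ⟨part1, part2, part3, ?_⟩
  intro hl j₂ hj1 hj2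
  have hminh : l1 < l2 * h :=
    lt_of_lt_of_le hl (mul_le_mul_of_nonneg_left (min_le_left _ _) hl2.le)
  have hmin2 : l1 < l2 * ((h + δ ^ μ) / 2) :=
    lt_of_lt_of_le hl (mul_le_mul_of_nonneg_left (min_le_right _ _) hl2.le)
  rcases eq_or_lt_of_le hj1 with he | hlt
  · rw [← he, show (-1 : ℤ) + 1 = 0 by ring]
    linarith
  · by_cases he2 : j₂ = (J:ℤ) - 2
    · rw [he2, show (J:ℤ) - 2 + 1 = (J:ℤ) - 1 by ring]
      linarith
    · have := part2 j₂ (by omega) (by omega)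
      linarith
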